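/- For every n ≥ 2, the eigenvalue −1 of the adjacency matrix of the pancake graph P(n) (over ℝ) has multiplicity at least n−1; that is, the eigenspace {x : A x = −x} of the adjacency matrix A of P(n) has dimension at least n−1. -/

import Mathlib

/-- The underlying function of the suffix reversal `ρ_r`. -/
def rhoFun (n r : ℕ) (i : Fin n) : Fin n :=
  if _h : n < r ∨ i.val < n - r then i else ⟨2 * n - r - 1 - i.val, by omega⟩

theorem rhoFun_involutive (n r : ℕ) : Function.Involutive (rhoFun n r) := by
  intro i
  by_cases h : n < r ∨ i.val < n - r
  · have h1 : rhoFun n r i = i := by rw [rhoFun, dif_pos h]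
    rw [h1, h1]
  · push_neg at h
    have h1 : rhoFun n r i = ⟨2 * n - r - 1 - i.val, by omega⟩ := by
      rw [rhoFun, dif_neg (by omega)]
    rw [h1, rhoFun, dif_neg (by simp; omega)]
    exact Fin.ext (by simp; omega)

/-- The suffix reversal `ρ_r` of `{1,…,n}` (modelled on `Fin n`, zero-based): it fixes
every position `i ≤ n−r` (one-based) and reverses the last `r` positions. -/
def rho (n r : ℕ) : Equiv.Perm (Fin n) := (rhoFun_involutive n r).toPerm

open scoped Classical in
/-- The adjacency matrix over `ℝ` of the pancake graph `P(n)`: the vertices are the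
permutations of `{1,…,n}` and `g` is adjacent to `g∘ρ_r` for every `r = 2,…,n`. -/
noncomputable def pancakeAdj (n : ℕ) :
    Matrix (Equiv.Perm (Fin n)) (Equiv.Perm (Fin n)) ℝ :=
  Matrix.of fun g h => if ∃ r ∈ Finset.Icc 2 n, h = g * rho n r then 1 else 0

/-- For every `n ≥ 2`, the eigenvalue `−1` of the adjacency matrix of
the pancake graph `P(n)` has multiplicity at least `n−1`: the eigenspace
`{x : A x = −x}` has dimension at least `n−1`. -/
theorem stmt8 (n : ℕ) (hn : 2 ≤ n) :
    n - 1 ≤ Module.finrank ℝ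
      (Module.End.eigenspace (Matrix.mulVecLin (pancakeAdj n)) (-1)) := by
  classical
  have hn0 : 0 < n := by omega
  set last : Fin n := ⟨n - 1, by omega⟩ with hlast
  set ev : Equiv.Perm (Fin n) → Fin n := fun g => g last with hev
  have hev_surj : Function.Surjective ev := fun i => ⟨Equiv.swap last i, by simp [hev]⟩
  set S : (Fin n → ℝ) →ₗ[ℝ] ℝ := ∑ i, LinearMap.proj i with hS
  have hS_apply : ∀ f : Fin n → ℝ, S f = ∑ i, f i := fun f => by
    simp [hS]
  have hS_surj : Function.Surjective S := by
    intro c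
    refine ⟨fun j => if j = last then c else 0, ?_⟩
    rw [hS_apply]; simp
  -- rho at last position
  have hrho : ∀ r, 2 ≤ r → r ≤ n → ((rho n r last : Fin n) : ℕ) = n - r := by
    intro r h2 hr
    have h0 : rho n r last = rhoFun n r last := rfl
    rw [h0, rhoFun, dif_neg]
    · show 2 * n - r - 1 - (n-1) = n - r
      omega
    · show ¬(n < r ∨ n - 1 < n - r)
      omega
  -- key eigenvector property
  have key : ∀ f : Fin n → ℝ, S f = 0 →
      Matrix.mulVecLin (pancakeAdj n) (fun g => f (ev g)) = (-1 : ℝ) • (fun g => f (ev g)) := by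
    intro f hf
    funext g
    have hsum0 : ∑ i : Fin n, f (g i) = 0 := by
      rw [Equiv.sum_comp g (fun j => f j), ← hS_apply]; exact hf
    have hstep1 : Matrix.mulVecLin (pancakeAdj n) (fun g => f (ev g)) g
        = ∑ h : Equiv.Perm (Fin n),
            (if ∃ r ∈ Finset.Icc 2 n, h = g * rho n r then (1:ℝ) else 0) * f (ev h) := by
      simp [Matrix.mulVecLin, Matrix.mulVec, dotProduct, pancakeAdj]
    rw [hstep1]
    have hstep2 : ∑ h : Equiv.Perm (Fin n),
          (if ∃ r ∈ Finset.Icc 2 n, h = g * rho n r then (1:ℝ) else 0) * f (ev h)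
        = ∑ h ∈ (Finset.Icc 2 n).image (fun r => g * rho n r), f (ev h) := by
      simp_rw [ite_mul, one_mul, zero_mul]
      rw [← Finset.sum_filter]
      apply Finset.sum_congr
      · ext h
        simp [Finset.mem_image, eq_comm]
      · intros; rfl
    rw [hstep2]
    have hinj : ∀ r ∈ Finset.Icc 2 n, ∀ s ∈ Finset.Icc 2 n,
        g * rho n r = g * rho n s → r = s := by
      intro r hr s hs h
      simp only [Finset.mem_Icc] at hr hs
      have h1 := congrArg (fun p : Equiv.Perm (Fin n) => ((p last : Fin n) : ℕ)) (mul_left_cancel h)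
      rw [hrho r hr.1 hr.2, hrho s hs.1 hs.2] at h1
      omega
    rw [Finset.sum_image hinj]
    have hterm : ∀ r ∈ Finset.Icc 2 n,
        f (ev (g * rho n r)) = f (g (rho n r last)) := by
      intro r _; rfl
    rw [Finset.sum_congr rfl hterm]
    have hbij : ∑ r ∈ Finset.Icc 2 n, f (g (rho n r last))
        = ∑ i ∈ Finset.univ.erase last, f (g i) := by
      refine Finset.sum_nbij' (i := fun r => rho n r last) (j := fun i => n - i.val)
        ?_ ?_ ?_ ?_ ?_
      · intro r hr
        simp only [Finset.mem_Icc] at hr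
        show rho n r last ∈ Finset.univ.erase last
        simp only [Finset.mem_erase, Finset.mem_univ, and_true]
        intro h
        have h2 := congrArg Fin.val h
        rw [hrho r hr.1 hr.2] at h2
        have h3 : (last : ℕ) = n - 1 := rfl
        omega
      · intro b hb
        simp only [Finset.mem_erase, Finset.mem_univ, and_true] at hb
        have hbv : (b : ℕ) < n := b.isLt
        have hbne : (b : ℕ) ≠ n - 1 := fun h => hb (Fin.ext (by simp [hlast, h]))
        simp only [Finset.mem_Icc]
        omega
      · intro r hr
        simp only [Finset.mem_Icc] at hr
        show n - (rho n r last : Fin n).val = r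
        rw [hrho r hr.1 hr.2]
        omega
      · intro b hb
        simp only [Finset.mem_erase, Finset.mem_univ, and_true] at hb
        have hbv : (b : ℕ) < n := b.isLt
        have hbne : (b : ℕ) ≠ n - 1 := fun h => hb (Fin.ext (by simp [hlast, h]))
        show rho n (n - b.val) last = b
        refine Fin.ext ?_
        rw [hrho (n - b.val) (by omega) (by omega)]
        omega
      · intro r hr; rfl
    rw [hbij]
    have herase : ∑ i ∈ Finset.univ.erase last, f (g i) + f (g last)
        = ∑ i : Fin n, f (g i) := Finset.sum_erase_add _ _ (Finset.mem_univ last)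
    have : ((-1 : ℝ) • fun g : Equiv.Perm (Fin n) => f (ev g)) g = -(f (g last)) := by
      simp [hev]
    rw [this]
    rw [hsum0] at herase
    linarith
  -- assemble the linear map
  set E := Module.End.eigenspace (Matrix.mulVecLin (pancakeAdj n)) (-1 : ℝ) with hE
  set Φ : (Fin n → ℝ) →ₗ[ℝ] (Equiv.Perm (Fin n) → ℝ) := LinearMap.funLeft ℝ ℝ ev with hΦ
  have hΦinj : Function.Injective Φ := LinearMap.funLeft_injective_of_surjective ℝ ℝ ev hev_surj
  have hmemE' : ∀ f : LinearMap.ker S, (Φ.comp (LinearMap.ker S).subtype) f ∈ E := by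
    intro f
    rw [Module.End.mem_eigenspace_iff]
    have hf : S (f : Fin n → ℝ) = 0 := f.2
    have := key (f : Fin n → ℝ) hf
    convert this using 2 <;> rfl
  set L : (LinearMap.ker S) →ₗ[ℝ] E :=
    LinearMap.codRestrict E (Φ.comp (LinearMap.ker S).subtype) hmemE' with hL
  have hLinj : Function.Injective L := by
    intro x y hxy
    have h : Φ (x : Fin n → ℝ) = Φ (y : Fin n → ℝ) := congrArg Subtype.val hxy
    exact Subtype.ext (hΦinj h)
  have hker : Module.finrank ℝ (LinearMap.ker S) = n - 1 := by
    have h1 := LinearMap.finrank_range_add_finrank_ker S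
    rw [LinearMap.range_eq_top.mpr hS_surj] at h1
    simp [Module.finrank_pi] at h1
    omega
  calc n - 1 = Module.finrank ℝ (LinearMap.ker S) := hker.symm
    _ ≤ Module.finrank ℝ E := LinearMap.finrank_le_finrank_of_injective hLinj
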